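/- The relational system (nwd(2^ω), ⊆, nwd(2^ω)) of nowhere dense subsets of Cantor space ordered by inclusion is Galois-Tukey equivalent to both the almost-refinement system Part*(ℂ_ω) and the refinement system Part(ℂ_ω) of the Cohen algebra. -/

import Mathlib

/-- A relational system `⟨A₋, A, A₊⟩`. -/
structure RelSys : Type 1 where
  Dom : Type
  Cod : Type
  Rel : Dom → Cod → Prop

/-- The dominating number `𝔡(A)` of a relational system. -/
noncomputable def dNum (S : RelSys) : Cardinal :=
  sInf { c | ∃ Y : Set S.Cod, Cardinal.mk Y = c ∧ ∀ x : S.Dom, ∃ y ∈ Y, S.Rel x y }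

/-- The bounding number `𝔟(A)` of a relational system. -/
noncomputable def bNum (S : RelSys) : Cardinal :=
  sInf { c | ∃ X : Set S.Dom, Cardinal.mk X = c ∧ ∀ y : S.Cod, ∃ x ∈ X, ¬ S.Rel x y }

/-- A generalized Galois–Tukey connection from `S` to `T` (`S ≤_T T`). -/
def GT (S T : RelSys) : Prop :=
  ∃ (φm : S.Dom → T.Dom) (φp : T.Cod → S.Cod),
    ∀ a b, T.Rel (φm a) b → S.Rel a (φp b)

/-- Galois–Tukey equivalence. -/
def GTequiv (S T : RelSys) : Prop := GT S T ∧ GT T S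

/-- The σ-version `A^σ` of a relational system. -/
def sigmaSys (S : RelSys) : RelSys :=
  ⟨S.Dom, ℕ → S.Cod, fun a f => ∃ n, S.Rel a (f n)⟩

/-- Sequential composition `A;B` of relational systems. -/
def seqComp (S T : RelSys) : RelSys :=
  ⟨S.Dom × (S.Cod → T.Dom), S.Cod × T.Cod,
   fun p q => S.Rel p.1 q.1 ∧ T.Rel (p.2 q.1) q.2⟩

/-- An antichain in a Boolean algebra: pairwise disjoint nonzero elements. -/
def BAAntichain {α : Type} [BooleanAlgebra α] (A : Set α) : Prop :=
  (∀ a ∈ A, a ≠ ⊥) ∧ ∀ a ∈ A, ∀ b ∈ A, a ≠ b → a ⊓ b = ⊥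

/-- A maximal antichain in a Boolean algebra. -/
def MaxAC {α : Type} [BooleanAlgebra α] (A : Set α) : Prop :=
  BAAntichain A ∧ ∀ b : α, b ≠ ⊥ → ∃ a ∈ A, a ⊓ b ≠ ⊥

/-- The countable chain condition. -/
def CCC (α : Type) [BooleanAlgebra α] : Prop :=
  ∀ A : Set α, BAAntichain A → A.Countable

/-- `C` refines `A` (written `A ≤ C`): every element of `C` is below some element of `A`. -/
def Refines {α : Type} [BooleanAlgebra α] (A C : Set α) : Prop :=
  ∀ c ∈ C, ∃ a ∈ A, c ≤ a

/-- `C` almost refines `A` (written `A ≤* C`). -/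
def AlmostRefines {α : Type} [BooleanAlgebra α] (A C : Set α) : Prop :=
  ∃ F : Finset α, ↑F ⊆ A ∧ Refines ((A \ ↑F) ∪ {F.sup id}) C

/-- The set of maximal antichains of `α`. -/
def PartT (α : Type) [BooleanAlgebra α] : Type := {A : Set α // MaxAC A}

/-- The refinement relational system `Part(α)`. -/
def PartSys (α : Type) [BooleanAlgebra α] : RelSys :=
  ⟨PartT α, PartT α, fun A C => Refines A.1 C.1⟩

/-- The almost-refinement relational system `Part*(α)`. -/
def PartStar (α : Type) [BooleanAlgebra α] : RelSys :=
  ⟨PartT α, PartT α, fun A C => AlmostRefines A.1 C.1⟩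

/-- The eventual domination relational system `(ωω, ≤*, ωω)`. -/
def domSys : RelSys :=
  ⟨ℕ → ℕ, ℕ → ℕ, fun f g => ∀ᶠ n in Filter.atTop, f n ≤ g n⟩

/-- Quotients of Boolean rings are Boolean rings. -/
instance quotBooleanRing (R : Type) [BooleanRing R] (I : Ideal R) :
    BooleanRing (R ⧸ I) :=
  { (inferInstance : CommRing (R ⧸ I)) with
    isIdempotentElem := fun a => by
      obtain ⟨x, rfl⟩ := Ideal.Quotient.mk_surjective a
      unfold IsIdempotentElem
      rw [← map_mul, BooleanRing.mul_self] }

/-- The quotient of a Boolean algebra by an ideal (presented as a ring ideal of the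
associated Boolean ring), again viewed as a Boolean algebra. -/
def quotAlg (α : Type) [BooleanAlgebra α] (I : Ideal (AsBoolRing α)) : Type :=
  AsBoolAlg (AsBoolRing α ⧸ I)

noncomputable instance quotAlgBA (α : Type) [BooleanAlgebra α] (I : Ideal (AsBoolRing α)) :
    BooleanAlgebra (quotAlg α I) :=
  inferInstanceAs (BooleanAlgebra (AsBoolAlg (AsBoolRing α ⧸ I)))

/-- The quotient map from a Boolean algebra to its quotient algebra. -/
def quotCls {α : Type} [BooleanAlgebra α] (I : Ideal (AsBoolRing α)) (a : α) : quotAlg α I :=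
  toBoolAlg (Ideal.Quotient.mk I (toBoolRing a))

/-- The ideal of finite subsets of `ω`, as a ring ideal of `P(ω)`. -/
def finIdeal : Ideal (AsBoolRing (Set ℕ)) where
  carrier := {x | (ofBoolRing x : Set ℕ).Finite}
  zero_mem' := by simp [ofBoolRing_zero, Set.bot_eq_empty]
  add_mem' := by
    intro a b ha hb
    simpa [ofBoolRing_add] using ((ha.union hb).subset (Set.symmDiff_subset_union))
  smul_mem' := by
    intro c x hx
    simpa [smul_eq_mul, ofBoolRing_mul] using hx.subset (by simp [Set.inf_eq_inter])

/-- `P(ω)/fin`. -/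
def PomegaFin : Type := quotAlg (Set ℕ) finIdeal

noncomputable instance : BooleanAlgebra PomegaFin := quotAlgBA _ _

/-- The ideal `Fin` of the product algebra `ωB`: functions with finite support. -/
def finSuppIdeal (B : Type) [BooleanAlgebra B] : Ideal (AsBoolRing (ℕ → B)) where
  carrier := {x | {n | (ofBoolRing x : ℕ → B) n ≠ ⊥}.Finite}
  zero_mem' := by simp [ofBoolRing_zero]
  add_mem' := by
    intro a b ha hb
    refine ((ha.union hb).subset ?_)
    intro n hn
    simp only [ofBoolRing_add, Pi.symmDiff_apply, Set.mem_setOf_eq] at hn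
    by_contra h
    simp only [Set.mem_union, Set.mem_setOf_eq] at h
    push_neg at h
    simp [h.1, h.2] at hn
  smul_mem' := by
    intro c x hx
    refine hx.subset ?_
    intro n hn
    simp only [smul_eq_mul, ofBoolRing_mul, Pi.inf_apply, Set.mem_setOf_eq] at hn
    simp only [Set.mem_setOf_eq]
    intro h
    simp [h] at hn

/-- The reduced power `ωB/Fin` of a Boolean algebra `B`. -/
def redPow (B : Type) [BooleanAlgebra B] : Type := quotAlg (ℕ → B) (finSuppIdeal B)

noncomputable instance (B : Type) [BooleanAlgebra B] : BooleanAlgebra (redPow B) := quotAlgBA _ _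

abbrev Cantor : Type := ℕ → Bool

/-- The basic clopen set `N_s` determined by a finite binary sequence `s`. -/
def cyl (s : List Bool) : Set Cantor := {f | ∀ i, i < s.length → f i = s.getD i false}

lemma cyl_measurable (s : List Bool) : MeasurableSet (cyl s) := by
  have h : cyl s = ⋂ i ∈ Finset.range s.length, (fun f : Cantor => f i) ⁻¹' {s.getD i false} := by
    ext f
    simp [cyl]
  rw [h]
  exact Finset.measurableSet_biInter _ fun i _ => (measurable_pi_apply i) (by trivial)

/-- The σ-ideal of meagre subsets of Cantor space. -/
def MeagreSets : Set (Set Cantor) := {s | IsMeagre s}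

/-- `cof(ℳ)`: the cofinality of the meagre ideal of Cantor space. -/
noncomputable def cofM : Cardinal :=
  sInf { c | ∃ F : Set (Set Cantor), (∀ s ∈ F, IsMeagre s) ∧
    (∀ s : Set Cantor, IsMeagre s → ∃ t ∈ F, s ⊆ t) ∧ Cardinal.mk F = c }

/-- `add(ℳ)`: the additivity of the meagre ideal of Cantor space. -/
noncomputable def addM : Cardinal :=
  sInf { c | ∃ F : Set (Set Cantor), (∀ s ∈ F, IsMeagre s) ∧
    ¬ IsMeagre (⋃₀ F) ∧ Cardinal.mk F = c }



/-- The Borel subsets of Cantor space, as a Boolean algebra of sets. -/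
abbrev BorelSets : Type := {s : Set Cantor // MeasurableSet s}

lemma IsMeagre.union' {X : Type} [TopologicalSpace X] {s t : Set X}
    (hs : IsMeagre s) (ht : IsMeagre t) : IsMeagre (s ∪ t) := by
  rw [IsMeagre, Set.compl_union]; exact Filter.inter_mem hs ht

/-- The ideal of meagre Borel sets, as a ring ideal of the Boolean ring of Borel sets. -/
noncomputable def meagreIdeal : Ideal (AsBoolRing BorelSets) where
  carrier := {x | IsMeagre ((ofBoolRing x : BorelSets) : Set Cantor)}
  zero_mem' := by
    show IsMeagre ((ofBoolRing (0 : AsBoolRing BorelSets) : BorelSets) : Set Cantor)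
    rw [ofBoolRing_zero]
    simpa using IsMeagre.empty
  add_mem' := by
    intro a b ha hb
    show IsMeagre ((ofBoolRing (a + b) : BorelSets) : Set Cantor)
    rw [ofBoolRing_add]
    refine (ha.union' hb).mono ?_
    have h : ((symmDiff (ofBoolRing a) (ofBoolRing b) : BorelSets) : Set Cantor)
        = symmDiff ((ofBoolRing a : BorelSets) : Set Cantor) ((ofBoolRing b : BorelSets) : Set Cantor) := rfl
    rw [h]
    exact symmDiff_le_sup
  smul_mem' := by
    intro c x hx
    show IsMeagre ((ofBoolRing (c • x) : BorelSets) : Set Cantor)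
    rw [smul_eq_mul, ofBoolRing_mul]
    refine hx.mono ?_
    have : ((ofBoolRing c ⊓ ofBoolRing x : BorelSets) : Set Cantor)
        = ((ofBoolRing c : BorelSets) : Set Cantor) ∩ (ofBoolRing x : BorelSets) := rfl
    rw [this]
    exact Set.inter_subset_right

/-- The Cohen algebra `ℂ_ω = Borel(2^ω)/meagre`. -/
def CohenAlg : Type := quotAlg BorelSets meagreIdeal

noncomputable instance : BooleanAlgebra CohenAlg := quotAlgBA _ _

/-- The equivalence class `[X]` of a Borel set in the Cohen algebra. -/
noncomputable def cohenCls (X : BorelSets) : CohenAlg := quotCls meagreIdeal X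

/-- The class `[N_s]` of a basic clopen set in the Cohen algebra. -/
noncomputable def cylC (s : List Bool) : CohenAlg := cohenCls ⟨cyl s, cyl_measurable s⟩

/-- The system of nowhere dense subsets of Cantor space ordered by inclusion. -/
def NwdCantorSys : RelSys :=
  ⟨{s : Set Cantor // IsNowhereDense s}, {s : Set Cantor // IsNowhereDense s},
   fun a b => a.1 ⊆ b.1⟩

namespace Stmt13Aux

abbrev QR : Type := AsBoolRing BorelSets ⧸ meagreIdeal

noncomputable def qmk (X : BorelSets) : QR := Ideal.Quotient.mk meagreIdeal (toBoolRing X)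

lemma mem_meagreIdeal {x : AsBoolRing BorelSets} :
    x ∈ meagreIdeal ↔ IsMeagre ((ofBoolRing x : BorelSets) : Set Cantor) := Iff.rfl

lemma coe_inf (X Y : BorelSets) : ((X ⊓ Y : BorelSets) : Set Cantor) = X.1 ∩ Y.1 := rfl
lemma coe_sup (X Y : BorelSets) : ((X ⊔ Y : BorelSets) : Set Cantor) = X.1 ∪ Y.1 := rfl
lemma coe_symmDiff (X Y : BorelSets) :
    ((symmDiff X Y : BorelSets) : Set Cantor) = symmDiff X.1 Y.1 := rfl

lemma qmk_sub_mem (X Y : BorelSets) :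
    qmk X = qmk Y ↔ IsMeagre (symmDiff X.1 Y.1) := by
  rw [qmk, qmk, Ideal.Quotient.eq, mem_meagreIdeal]
  have : ((ofBoolRing (toBoolRing X - toBoolRing Y) : BorelSets) : Set Cantor)
      = symmDiff X.1 Y.1 := by
    rw [ofBoolRing_sub, ofBoolRing_toBoolRing, ofBoolRing_toBoolRing, coe_symmDiff]
  rw [this]

lemma cohenCls_surjective : Function.Surjective cohenCls := by
  intro c
  obtain ⟨x, hx⟩ := Ideal.Quotient.mk_surjective
    (ofBoolAlg (c : AsBoolAlg QR))
  refine ⟨ofBoolRing x, ?_⟩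
  show toBoolAlg (Ideal.Quotient.mk meagreIdeal (toBoolRing (ofBoolRing x)))
      = (c : AsBoolAlg QR)
  rw [toBoolRing_ofBoolRing, hx]
  exact toBoolAlg_ofBoolAlg (c : AsBoolAlg QR)

lemma cohenCls_le_iff {X Y : BorelSets} :
    cohenCls X ≤ cohenCls Y ↔ IsMeagre (X.1 \ Y.1) := by
  suffices h : (toBoolAlg (qmk X) : AsBoolAlg QR) ≤ toBoolAlg (qmk Y)
      ↔ IsMeagre (X.1 \ Y.1) from h
  rw [← ofBoolAlg_mul_ofBoolAlg_eq_left_iff, ofBoolAlg_toBoolAlg, ofBoolAlg_toBoolAlg]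
  have h1 : qmk X * qmk Y = qmk (X ⊓ Y) := by
    rw [qmk, qmk, qmk, ← map_mul, toBoolRing_inf]
  rw [h1, qmk_sub_mem, coe_inf]
  have h3 : symmDiff (X.1 ∩ Y.1) X.1 = X.1 \ Y.1 := by
    ext z; simp [Set.mem_symmDiff]; tauto
  rw [h3]

lemma cohenCls_eq_iff {X Y : BorelSets} :
    cohenCls X = cohenCls Y ↔ IsMeagre (symmDiff X.1 Y.1) := by
  suffices h : (toBoolAlg (qmk X) : AsBoolAlg QR) = toBoolAlg (qmk Y)
      ↔ IsMeagre (symmDiff X.1 Y.1) from h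
  rw [toBoolAlg_inj, qmk_sub_mem]

lemma cohenCls_eq_bot_iff {X : BorelSets} : cohenCls X = ⊥ ↔ IsMeagre X.1 := by
  suffices h : (toBoolAlg (qmk X) : AsBoolAlg QR) = ⊥ ↔ IsMeagre X.1 from h
  rw [← toBoolAlg_zero, toBoolAlg_inj, qmk, Ideal.Quotient.eq_zero_iff_mem,
    mem_meagreIdeal, ofBoolRing_toBoolRing]

lemma cohenCls_inf (X Y : BorelSets) : cohenCls (X ⊓ Y) = cohenCls X ⊓ cohenCls Y := by
  show (toBoolAlg (qmk (X ⊓ Y)) : AsBoolAlg QR) = toBoolAlg (qmk X) ⊓ toBoolAlg (qmk Y)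
  rw [← toBoolAlg_mul]
  congr 1

lemma cohenCls_sup (X Y : BorelSets) : cohenCls (X ⊔ Y) = cohenCls X ⊔ cohenCls Y := by
  show (toBoolAlg (qmk (X ⊔ Y)) : AsBoolAlg QR) = toBoolAlg (qmk X) ⊔ toBoolAlg (qmk Y)
  rw [← toBoolAlg_add_add_mul]
  congr 1
  simp only [qmk]
  rw [← map_mul, ← map_add, ← map_add]
  congr 1
  rw [show X ⊔ Y = symmDiff (symmDiff X Y) (X ⊓ Y) from (symmDiff_symmDiff_inf X Y).symm,
    toBoolRing_symmDiff, toBoolRing_symmDiff, toBoolRing_inf]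


/-! ### Cylinder lemmas -/

def pt (t : List Bool) : Cantor := fun i => t.getD i false

lemma pt_mem_cyl (t : List Bool) : pt t ∈ cyl t := fun _ _ => rfl

lemma cyl_nonempty (t : List Bool) : (cyl t).Nonempty := ⟨pt t, pt_mem_cyl t⟩

lemma cyl_eq_biInter (s : List Bool) :
    cyl s = ⋂ i ∈ Finset.range s.length, (fun f : Cantor => f i) ⁻¹' {s.getD i false} := by
  ext f; simp [cyl]

lemma isOpen_cyl (t : List Bool) : IsOpen (cyl t) := by
  rw [cyl_eq_biInter]
  exact isOpen_biInter_finset fun i _ => (isOpen_discrete _).preimage (continuous_apply i)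

lemma isClosed_cyl (t : List Bool) : IsClosed (cyl t) := by
  rw [cyl_eq_biInter]
  exact isClosed_biInter fun i _ => (isClosed_discrete _).preimage (continuous_apply i)

lemma cyl_anti_prefix {u t : List Bool} (h : u <+: t) : cyl t ⊆ cyl u := by
  intro f hf i hi
  obtain ⟨v, rfl⟩ := h
  have hi' : i < (u ++ v).length := by simp; omega
  have := hf i hi'
  rw [this, List.getD_eq_getElem _ _ hi, List.getD_eq_getElem _ _ hi']
  exact List.getElem_append_left hi

lemma prefix_of_mem_inter {s t : List Bool} {f : Cantor} (hs : f ∈ cyl s) (ht : f ∈ cyl t)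
    (h : s.length ≤ t.length) : s <+: t := by
  rw [List.prefix_iff_eq_take]
  refine List.ext_getElem (by simp [h]) ?_
  intro i h1 h2
  have e1 := hs i h1
  have hit : i < t.length := lt_of_lt_of_le h1 h
  have e2 := ht i hit
  rw [List.getD_eq_getElem _ _ h1] at e1
  rw [List.getD_eq_getElem _ _ hit] at e2
  rw [← e1, e2, List.getElem_take]

lemma cyl_subset_of_mem_inter {s t : List Bool} {f : Cantor} (hs : f ∈ cyl s) (ht : f ∈ cyl t)
    (h : s.length ≤ t.length) : cyl t ⊆ cyl s :=
  cyl_anti_prefix (prefix_of_mem_inter hs ht h)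

lemma exists_cyl_subset_of_isOpen {U : Set Cantor} (hU : IsOpen U) {x : Cantor} (hx : x ∈ U) :
    ∃ t, x ∈ cyl t ∧ cyl t ⊆ U := by
  obtain ⟨I, u, hIu, hsub⟩ := isOpen_pi_iff.mp hU x hx
  set n := (I.sup id) + 1 with hn
  refine ⟨List.ofFn (fun i : Fin n => x i), ?_, ?_⟩
  · intro i hi
    simp only [List.length_ofFn] at hi
    rw [List.getD_eq_getElem _ _ (by simpa [hn, Nat.lt_succ_iff] using hi), List.getElem_ofFn]
  · intro g hg
    apply hsub
    intro a ha
    have han : a < n := by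
      have := Finset.le_sup (f := id) ha
      simp only [id_eq] at this
      omega
    have := hg a (by simpa [hn, Nat.lt_succ_iff] using han)
    rw [List.getD_eq_getElem _ _ (by simpa [hn, Nat.lt_succ_iff] using han), List.getElem_ofFn] at this
    rw [this]
    exact (hIu a ha).2

lemma exists_minimal_prefix {P : List Bool → Prop} {t : List Bool} (h : P t) :
    ∃ u, u <+: t ∧ P u ∧ ∀ v, v <+: u → v ≠ u → ¬ P v := by
  classical
  have H : ∃ k, P (t.take k) := ⟨t.length, by simpa [List.take_length] using h⟩
  set n := Nat.find H with hn
  have hnle : n ≤ t.length := Nat.find_le (by simpa [List.take_length] using h)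
  refine ⟨t.take n, List.take_prefix n t, Nat.find_spec H, ?_⟩
  intro v hv hne hPv
  have hvt : v = (t.take n).take v.length := List.prefix_iff_eq_take.mp hv
  have hlv : v.length ≤ n := by
    have := hv.length_le
    simpa [List.length_take, hnle, min_eq_left hnle] using this
  have hlt : v.length < n := by
    rcases lt_or_eq_of_le hlv with h' | h'
    · exact h'
    · exfalso; apply hne
      rw [hvt, List.take_take, h']
      simp [min_eq_left hnle]
  apply Nat.find_min H hlt
  rw [hvt, List.take_take] at hPv
  simpa [min_eq_left (le_of_lt hlt)] using hPv

/-! ### Baire category lemmas -/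

lemma not_meagre_of_isOpen_nonempty {U : Set Cantor} (hU : IsOpen U) (hne : U.Nonempty) :
    ¬ IsMeagre U := by
  intro h
  obtain ⟨x, hx1, hx2⟩ := (dense_of_mem_residual h).inter_open_nonempty U hU hne
  exact hx2 hx1

lemma eq_empty_of_isOpen_meagre {U : Set Cantor} (hU : IsOpen U) (h : IsMeagre U) : U = ∅ := by
  by_contra hne
  exact not_meagre_of_isOpen_nonempty hU (Set.nonempty_iff_ne_empty.mpr hne) h

lemma cyl_not_meagre (t : List Bool) : ¬ IsMeagre (cyl t) :=
  not_meagre_of_isOpen_nonempty (isOpen_cyl t) (cyl_nonempty t)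

lemma isMeagre_congr {s t : Set Cantor} (h : s =ᶠ[residual Cantor] t) :
    IsMeagre s ↔ IsMeagre t := by
  unfold IsMeagre
  exact Filter.eventually_congr (h.mono fun x hx => not_congr (iff_of_eq hx))

lemma meagre_symmDiff_of_eventuallyEq {s t : Set Cantor} (h : s =ᶠ[residual Cantor] t) :
    IsMeagre (symmDiff s t) := by
  show ∀ᶠ x in residual Cantor, x ∈ (symmDiff s t)ᶜ
  filter_upwards [h] with x hx
  simp only [Set.mem_compl_iff, Set.mem_symmDiff]
  have hx' : x ∈ s ↔ x ∈ t := iff_of_eq hx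
  tauto

/-! ### Cohen algebra and cylinders -/

lemma cylC_ne_bot (t : List Bool) : cylC t ≠ ⊥ := by
  rw [cylC, Ne, cohenCls_eq_bot_iff]
  exact cyl_not_meagre t

lemma cylC_le_of_subset {u t : List Bool} (h : cyl u ⊆ cyl t) : cylC u ≤ cylC t := by
  rw [cylC, cylC, cohenCls_le_iff]
  have : cyl u \ cyl t = ∅ := Set.diff_eq_empty.mpr h
  rw [this]; exact IsMeagre.empty

lemma cylC_congr {u t : List Bool} (h : cyl u = cyl t) : cylC u = cylC t := by
  rw [cylC, cylC]; congr 1; exact Subtype.ext h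

lemma subset_of_cylC_le_clopen {t : List Bool} {V : Set Cantor} (hV : IsClosed V)
    (hm : MeasurableSet V) (h : cylC t ≤ cohenCls ⟨V, hm⟩) : cyl t ⊆ V := by
  rw [cylC, cohenCls_le_iff] at h
  exact Set.diff_eq_empty.mp (eq_empty_of_isOpen_meagre ((isOpen_cyl t).sdiff hV) h)

lemma exists_cylC_le {c : CohenAlg} {t : List Bool} (h : ¬ cylC t ⊓ c = ⊥) :
    ∃ u, cyl u ⊆ cyl t ∧ cylC u ≤ c := by
  obtain ⟨X, rfl⟩ := cohenCls_surjective c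
  rw [cylC, ← cohenCls_inf, cohenCls_eq_bot_iff, coe_inf] at h
  obtain ⟨O, hO, hXO⟩ := X.2.residualEq_isOpen
  have h2 : ¬ IsMeagre (cyl t ∩ O) := by
    rw [← isMeagre_congr ((Filter.EventuallyEq.refl _ _).inter hXO)]
    exact h
  have hne : (cyl t ∩ O).Nonempty := by
    rcases Set.eq_empty_or_nonempty (cyl t ∩ O) with he | hne
    · exact absurd (he ▸ IsMeagre.empty) h2
    · exact hne
  obtain ⟨x, hx⟩ := hne
  obtain ⟨u, hxu, hu⟩ := exists_cyl_subset_of_isOpen ((isOpen_cyl t).inter hO) hx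
  refine ⟨u, hu.trans Set.inter_subset_left, ?_⟩
  rw [cylC, cohenCls_le_iff]
  refine (meagre_symmDiff_of_eventuallyEq hXO.symm).mono ?_
  intro z hz
  simp only [Set.mem_diff] at hz
  simp only [Set.mem_symmDiff]
  exact Or.inl ⟨(hu.trans Set.inter_subset_right) hz.1, hz.2⟩

lemma cohenCls_top : cohenCls ⊤ = ⊤ := by
  show (toBoolAlg (qmk ⊤) : AsBoolAlg QR) = ⊤
  rw [← toBoolAlg_one]
  congr 1

lemma cylC_nil : cylC [] = ⊤ := by
  have h : (⟨cyl [], cyl_measurable []⟩ : BorelSets) = ⊤ := Subtype.ext (by ext f; simp [cyl])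
  rw [cylC, h, cohenCls_top]

/-! ### Minimal cylinders and antichains -/

def MinCylP (P : List Bool → Prop) : Set (List Bool) :=
  {t | P t ∧ ∀ v, v <+: t → v ≠ t → ¬ P v}

lemma minCylP_eq {P : List Bool → Prop} {t t' : List Bool} (ht : t ∈ MinCylP P)
    (ht' : t' ∈ MinCylP P) (hne : (cyl t ∩ cyl t').Nonempty) : t = t' := by
  obtain ⟨f, hf1, hf2⟩ := hne
  rcases le_total t.length t'.length with h | h
  · by_contra hne'
    exact ht'.2 t (prefix_of_mem_inter hf1 hf2 h) hne' ht.1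
  · by_contra hne'
    exact ht.2 t' (prefix_of_mem_inter hf2 hf1 h) (fun e => hne' e.symm) ht'.1

def ACof (U : Set Cantor) : Set CohenAlg := cylC '' MinCylP (fun t => cyl t ⊆ U)

lemma disjoint_bot {t t' : List Bool} (h : cyl t ∩ cyl t' = ∅) : cylC t ⊓ cylC t' = ⊥ := by
  rw [cylC, cylC, ← cohenCls_inf, cohenCls_eq_bot_iff, coe_inf, h]
  exact IsMeagre.empty

lemma maxAC_ACof {U : Set Cantor} (hU : IsOpen U) (hd : Dense U) : MaxAC (ACof U) := by
  constructor
  · constructor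
    · rintro a ⟨t, _, rfl⟩
      exact cylC_ne_bot t
    · rintro a ⟨t, ht, rfl⟩ b ⟨t', ht', rfl⟩ hne
      have htt' : t ≠ t' := fun e => hne (by rw [e])
      apply disjoint_bot
      rcases Set.eq_empty_or_nonempty (cyl t ∩ cyl t') with he | hne'
      · exact he
      · exact absurd (minCylP_eq ht ht' hne') htt'
  · intro b hb
    obtain ⟨X, rfl⟩ := cohenCls_surjective b
    have hb' : ¬ cylC [] ⊓ cohenCls X = ⊥ := by
      rw [cylC_nil, top_inf_eq]; exact hb
    obtain ⟨u, _, hu⟩ := exists_cylC_le hb'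
    obtain ⟨x, hx⟩ := hd.inter_open_nonempty (cyl u) (isOpen_cyl u) (cyl_nonempty u)
    obtain ⟨w, hxw, hw⟩ := exists_cyl_subset_of_isOpen ((isOpen_cyl u).inter hU) hx
    obtain ⟨w', hw'pre, hw'P, hw'min⟩ :=
      exists_minimal_prefix (P := fun t => cyl t ⊆ U) (hw.trans Set.inter_subset_right)
    refine ⟨cylC w', ⟨w', ⟨hw'P, hw'min⟩, rfl⟩, ?_⟩
    rw [cylC, ← cohenCls_inf, Ne, cohenCls_eq_bot_iff, coe_inf]
    intro hmeag
    have h1 : IsMeagre (cyl u \ X.1) := by rwa [cylC, cohenCls_le_iff] at hu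
    have h2 : cyl w ⊆ (cyl w' ∩ X.1) ∪ (cyl u \ X.1) := by
      intro z hz
      by_cases hzX : z ∈ X.1
      · exact Or.inl ⟨cyl_anti_prefix hw'pre hz, hzX⟩
      · exact Or.inr ⟨(hw.trans Set.inter_subset_left) hz, hzX⟩
    exact cyl_not_meagre w ((hmeag.union' h1).mono h2)

/-! ### The dense open set associated to a maximal antichain -/

def belowCyls (C : Set CohenAlg) : Set Cantor :=
  ⋃ t ∈ {t : List Bool | ∃ c ∈ C, cylC t ≤ c}, cyl t

lemma isOpen_belowCyls (C : Set CohenAlg) : IsOpen (belowCyls C) :=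
  isOpen_biUnion fun t _ => isOpen_cyl t

lemma dense_belowCyls {C : Set CohenAlg} (hC : MaxAC C) : Dense (belowCyls C) := by
  rw [dense_iff_inter_open]
  intro U hU ⟨x, hx⟩
  obtain ⟨t, hxt, ht⟩ := exists_cyl_subset_of_isOpen hU hx
  obtain ⟨c, hc, hcb⟩ := hC.2 (cylC t) (cylC_ne_bot t)
  have h' : ¬ cylC t ⊓ c = ⊥ := by rwa [inf_comm]
  obtain ⟨u, hu, huc⟩ := exists_cylC_le h'
  refine ⟨pt u, ht (hu (pt_mem_cyl u)), ?_⟩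
  exact Set.mem_biUnion ⟨c, hc, huc⟩ (pt_mem_cyl u)

lemma nwd_compl_of_open_dense {U : Set Cantor} (hU : IsOpen U) (hd : Dense U) :
    IsNowhereDense Uᶜ := by
  unfold IsNowhereDense
  rw [hU.isClosed_compl.closure_eq, interior_eq_empty_iff_dense_compl, compl_compl]
  exact hd

lemma dense_compl_closure {s : Set Cantor} (hs : IsNowhereDense s) :
    Dense (closure s)ᶜ := interior_eq_empty_iff_dense_compl.mp hs

/-! ### Minimal cylinders below an antichain -/

def MinBelow (A : Set CohenAlg) : Set (List Bool) :=
  MinCylP (fun t => ∃ a ∈ A, cylC t ≤ a)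

lemma minBelow_dense {A : Set CohenAlg} (hA : MaxAC A) (t : List Bool) :
    ∃ u ∈ MinBelow A, (cyl t ∩ cyl u).Nonempty := by
  obtain ⟨a, ha, hab⟩ := hA.2 (cylC t) (cylC_ne_bot t)
  have h' : ¬ cylC t ⊓ a = ⊥ := by rwa [inf_comm]
  obtain ⟨w, hw, hwa⟩ := exists_cylC_le h'
  obtain ⟨w', hw'pre, hw'P, hw'min⟩ :=
    exists_minimal_prefix (P := fun v => ∃ a ∈ A, cylC v ≤ a) ⟨a, ha, hwa⟩
  exact ⟨w', ⟨hw'P, hw'min⟩, pt w, hw (pt_mem_cyl w), cyl_anti_prefix hw'pre (pt_mem_cyl w)⟩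

def encode (A : Set CohenAlg) : Set Cantor := closure (pt '' MinBelow A)

lemma getD_append_singleton (w : List Bool) (b : Bool) :
    (w ++ [b]).getD w.length false = b := by
  rw [List.getD_eq_getElem _ _ (by simp), List.getElem_append_right (le_refl w.length)]
  simp

lemma encode_nwd {A : Set CohenAlg} (hA : MaxAC A) : IsNowhereDense (encode A) := by
  set S := pt '' MinBelow A with hS
  unfold IsNowhereDense encode
  rw [closure_closure]
  suffices hsuf : ∀ t : List Bool, ¬ cyl t ⊆ closure S by
    by_contra h
    obtain ⟨x, hx⟩ := Set.nonempty_iff_ne_empty.mpr h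
    obtain ⟨t, _, ht⟩ := exists_cyl_subset_of_isOpen isOpen_interior hx
    exact hsuf t (ht.trans interior_subset)
  intro t hsub
  obtain ⟨u, hu, f, hft, hfu⟩ := minBelow_dense hA t
  -- get w with cyl w ⊆ cyl t ∩ cyl u
  obtain ⟨w, hwt, hwu⟩ : ∃ w : List Bool, cyl w ⊆ cyl t ∧ cyl w ⊆ cyl u := by
    rcases le_total t.length u.length with h | h
    · exact ⟨u, cyl_subset_of_mem_inter hft hfu h, le_refl _⟩
    · exact ⟨t, le_refl _, cyl_subset_of_mem_inter hfu hft h⟩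
  have hSw : S ∩ cyl w ⊆ {pt u} := by
    rintro y ⟨⟨u', hu', rfl⟩, hyw⟩
    have : u' = u := minCylP_eq hu' hu ⟨pt u', pt_mem_cyl u', hwu hyw⟩
    rw [this]; rfl
  set v := w ++ [!(pt u w.length)] with hv
  have hvw : cyl v ⊆ cyl w := cyl_anti_prefix (List.prefix_append w _)
  have hptv : pt u ∉ cyl v := by
    intro hmem
    have := hmem w.length (by simp [hv])
    rw [hv, getD_append_singleton] at this
    simp at this
  have hvS : (cyl v ∩ S).Nonempty :=
    mem_closure_iff.mp (hsub (hwt (hvw (pt_mem_cyl v)))) (cyl v) (isOpen_cyl v) (pt_mem_cyl v)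
  obtain ⟨y, hyv, hyS⟩ := hvS
  have : y = pt u := hSw ⟨hyS, hvw hyv⟩
  exact hptv (this ▸ hyv)

/-! ### Galois–Tukey connections -/

lemma gtTrans {S T U : RelSys} (h1 : GT S T) (h2 : GT T U) : GT S U := by
  obtain ⟨f1, g1, hh1⟩ := h1
  obtain ⟨f2, g2, hh2⟩ := h2
  exact ⟨f2 ∘ f1, g1 ∘ g2, fun a b hb => hh1 a (g2 b) (hh2 (f1 a) b hb)⟩

lemma gt_star_plain : GT (PartStar CohenAlg) (PartSys CohenAlg) := by
  refine ⟨id, id, ?_⟩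
  intro A C h
  refine ⟨∅, by simp, ?_⟩
  intro c hc
  obtain ⟨a, ha, hle⟩ := h c hc
  exact ⟨a, Or.inl ⟨ha, by simp⟩, hle⟩

lemma gtN_star : GT NwdCantorSys (PartStar CohenAlg) := by
  refine ⟨fun s => ⟨ACof (closure s.1)ᶜ,
      maxAC_ACof isClosed_closure.isOpen_compl (dense_compl_closure s.2)⟩,
    fun C => ⟨(belowCyls C.1)ᶜ,
      nwd_compl_of_open_dense (isOpen_belowCyls C.1) (dense_belowCyls C.2)⟩, ?_⟩
  intro s C h
  intro x hx
  simp only [Set.mem_compl_iff]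
  intro hmem
  obtain ⟨F, hF, href⟩ := h
  simp only [belowCyls, Set.mem_iUnion, Set.mem_setOf_eq] at hmem
  obtain ⟨t, ⟨c, hc, hct⟩, hxt⟩ := hmem
  obtain ⟨a, hau, hca⟩ := href c hc
  have hta : cylC t ≤ a := hct.trans hca
  have hxcl : x ∈ closure s.1 := subset_closure hx
  rcases hau with hL | hR
  · obtain ⟨u, hu, rfl⟩ := hL.1
    have hsub : cyl t ⊆ cyl u := subset_of_cylC_le_clopen (isClosed_cyl u) (cyl_measurable u) hta
    exact (hu.1 (hsub hxt)) hxcl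
  · rw [Set.mem_singleton_iff] at hR
    have hp : ∃ V : Set Cantor, ∃ hm : MeasurableSet V,
        IsClosed V ∧ V ⊆ (closure s.1)ᶜ ∧ F.sup id = cohenCls ⟨V, hm⟩ := by
      refine Finset.sup_induction (p := fun a => ∃ V : Set Cantor, ∃ hm : MeasurableSet V,
        IsClosed V ∧ V ⊆ (closure s.1)ᶜ ∧ a = cohenCls ⟨V, hm⟩) ?_ ?_ ?_
      · exact ⟨∅, MeasurableSet.empty, isClosed_empty, Set.empty_subset _,
          (cohenCls_eq_bot_iff.mpr IsMeagre.empty).symm⟩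
      · rintro a1 ⟨V1, hm1, hc1, hs1, rfl⟩ a2 ⟨V2, hm2, hc2, hs2, rfl⟩
        refine ⟨V1 ∪ V2, hm1.union hm2, hc1.union hc2, Set.union_subset hs1 hs2, ?_⟩
        rw [← cohenCls_sup]
        exact congrArg cohenCls (Subtype.ext rfl)
      · intro b hb
        obtain ⟨u, hu, rfl⟩ := hF hb
        exact ⟨cyl u, cyl_measurable u, isClosed_cyl u, hu.1, rfl⟩
    obtain ⟨V, hm, hcV, hsV, hEq⟩ := hp
    rw [hR, hEq] at hta
    exact hsV (subset_of_cylC_le_clopen hcV hm hta hxt) hxcl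

lemma gtPN : GT (PartSys CohenAlg) NwdCantorSys := by
  refine ⟨fun A => ⟨encode A.1, encode_nwd A.2⟩,
    fun b => ⟨ACof (closure b.1)ᶜ,
      maxAC_ACof isClosed_closure.isOpen_compl (dense_compl_closure b.2)⟩, ?_⟩
  intro A b hsub
  rintro c ⟨s, hs, rfl⟩
  obtain ⟨u, hu, f, hfs, hfu⟩ := minBelow_dense A.2 s
  rcases le_total u.length s.length with h | h
  · obtain ⟨a, ha, hua⟩ := hu.1
    exact ⟨a, ha, (cylC_le_of_subset (cyl_subset_of_mem_inter hfu hfs h)).trans hua⟩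
  · exfalso
    have h1 : pt u ∈ cyl s := cyl_subset_of_mem_inter hfs hfu h (pt_mem_cyl u)
    have h2 : pt u ∈ b.1 := hsub (subset_closure ⟨u, hu, rfl⟩)
    exact (hs.1 h1) (subset_closure h2)

end Stmt13Aux

/-- `(nwd(2^ω), ⊆, nwd(2^ω)) ≡_T Part*(ℂ_ω) ≡_T Part(ℂ_ω)`. -/
theorem stmt13 :
    GTequiv NwdCantorSys (PartStar CohenAlg) ∧ GTequiv NwdCantorSys (PartSys CohenAlg) := by
  refine ⟨⟨Stmt13Aux.gtN_star, Stmt13Aux.gtTrans Stmt13Aux.gt_star_plain Stmt13Aux.gtPN⟩,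
    ⟨Stmt13Aux.gtTrans Stmt13Aux.gtN_star Stmt13Aux.gt_star_plain, Stmt13Aux.gtPN⟩⟩
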